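/- Let d ≥ 3 with d ≠ 4, fix ζ' ∈ ℝ^d with first coordinate ζ₁' ≠ 0, let r > 0, and set ρ(ζ) = |ζ − ζ'|. Define P(ζ) = ( ζ₁ ζ₁' − ρ²/(d−4) )·ρ^{2−d} − (r²/d)·( (d−2)·ζ₁·(ζ₁' − ζ₁)·ρ^{−d} − ρ^{2−d} ) − ( ρ² + 2 ζ₁ ζ₁' + (d−2) ζ₁² )·r^{2−d}/d + r^{4−d}/(d−4). Then: (i) P(ζ) = 0 for every ζ with |ζ − ζ'| = r; and (ii) ζ₁·ΔP(ζ) = 2·∂P/∂ζ₁(ζ) for every ζ with ζ₁ ≠ 0 and ζ ≠ ζ'. Thus P is the pressure of the free-boundary flow of an expanding sphere of radius r centered at ζ' in the medium with κη = ζ₁⁻², η = 1. -/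

import Mathlib

/-- First partial derivative in direction `i` of a scalar function on `ℝ^d`. -/
noncomputable def pd {d : ℕ} (i : Fin d) (f : EuclideanSpace ℝ (Fin d) → ℝ)
    (ζ : EuclideanSpace ℝ (Fin d)) : ℝ :=
  fderiv ℝ f ζ (EuclideanSpace.single i 1)

/-- Laplacian `Δ = Σᵢ ∂²/∂ζᵢ²` of a scalar function on `ℝ^d`. -/
noncomputable def lap {d : ℕ} (f : EuclideanSpace ℝ (Fin d) → ℝ)
    (ζ : EuclideanSpace ℝ (Fin d)) : ℝ :=
  ∑ i : Fin d, pd i (pd i f) ζ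



open Real EuclideanSpace

lemma sq_ne {d : ℕ} {cen ζ : EuclideanSpace ℝ (Fin d)} (h : ζ ≠ cen) :
    ‖ζ - cen‖ ^ 2 ≠ 0 :=
  pow_ne_zero _ (norm_ne_zero_iff.mpr (sub_ne_zero.mpr h))

lemma hasFDerivAt_Sq {d : ℕ} (cen ζ : EuclideanSpace ℝ (Fin d)) :
    HasFDerivAt (fun z => ‖z - cen‖ ^ 2) ((2:ℕ) • (innerSL ℝ (ζ - cen))) ζ := by
  simpa using ((hasFDerivAt_id ζ).sub_const cen).norm_sq

lemma hasDerivAt_quad (c0 c1 c2 x : ℝ) :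
    HasDerivAt (fun t : ℝ => c0 + c1 * t + c2 * t ^ 2) (c1 + 2 * c2 * x) x := by
  have h := (((hasDerivAt_id x).const_mul c1).const_add c0).add ((hasDerivAt_pow 2 x).const_mul c2)
  refine HasDerivAt.congr_deriv h ?_
  ring

/-- shape-0 term derivative -/
lemma shape0 {d : ℕ} (cen : EuclideanSpace ℝ (Fin d)) (i0 : Fin d) (c0 c1 c2 e : ℝ)
    (ζ : EuclideanSpace ℝ (Fin d)) (hζ : ζ ≠ cen) :
    ∃ L : EuclideanSpace ℝ (Fin d) →L[ℝ] ℝ,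
      HasFDerivAt (fun z => (c0 + c1 * z i0 + c2 * (z i0) ^ 2) * (‖z - cen‖ ^ 2) ^ e) L ζ ∧
      ∀ j : Fin d, L (EuclideanSpace.single j 1) =
        (c1 + 2 * c2 * ζ i0) * (if j = i0 then 1 else 0) * (‖ζ - cen‖ ^ 2) ^ e
        + (c0 + c1 * ζ i0 + c2 * (ζ i0) ^ 2) *
            (e * (‖ζ - cen‖ ^ 2) ^ (e - 1) * (2 * (ζ j - cen j))) := by
  have hproj : HasFDerivAt (fun z : EuclideanSpace ℝ (Fin d) => z i0)
      (EuclideanSpace.proj i0 : EuclideanSpace ℝ (Fin d) →L[ℝ] ℝ) ζ :=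
    ((EuclideanSpace.proj (𝕜 := ℝ) i0).hasFDerivAt (x := ζ)).congr_of_eventuallyEq
      (Filter.Eventually.of_forall fun z => rfl)
  have hA : HasFDerivAt (fun z : EuclideanSpace ℝ (Fin d) =>
      c0 + c1 * z i0 + c2 * (z i0) ^ 2)
      ((c1 + 2 * c2 * ζ i0) • (EuclideanSpace.proj i0 : EuclideanSpace ℝ (Fin d) →L[ℝ] ℝ)) ζ :=
    (hasDerivAt_quad c0 c1 c2 (ζ i0)).comp_hasFDerivAt (f := fun z : EuclideanSpace ℝ (Fin d) => z i0) ζ hproj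
  have hS : HasFDerivAt (fun z : EuclideanSpace ℝ (Fin d) => (‖z - cen‖ ^ 2) ^ e)
      ((e * (‖ζ - cen‖ ^ 2) ^ (e - 1)) • ((2:ℕ) • (innerSL ℝ (ζ - cen)))) ζ :=
    (Real.hasDerivAt_rpow_const (Or.inl (sq_ne hζ))).comp_hasFDerivAt (f := fun z : EuclideanSpace ℝ (Fin d) => ‖z - cen‖ ^ 2) ζ (hasFDerivAt_Sq cen ζ)
  refine ⟨_, hA.mul hS, fun j => ?_⟩
  have h1 : (EuclideanSpace.proj (𝕜 := ℝ) i0) (EuclideanSpace.single j (1:ℝ)) =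
      if j = i0 then 1 else 0 := by
    simp [EuclideanSpace.single_apply, eq_comm]
  have h2 : (innerSL ℝ (ζ - cen)) (EuclideanSpace.single j (1:ℝ)) = ζ j - cen j := by
    simp [EuclideanSpace.inner_single_right]
  simp only [ContinuousLinearMap.add_apply, ContinuousLinearMap.smul_apply,
    ContinuousLinearMap.coe_smul', Pi.smul_apply, smul_eq_mul, nsmul_eq_mul, h1, h2,
    Nat.cast_ofNat]
  ring

/-- shape-1 term derivative -/
lemma shape1 {d : ℕ} (cen : EuclideanSpace ℝ (Fin d)) (i0 i : Fin d) (c0 c1 c2 e : ℝ)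
    (ζ : EuclideanSpace ℝ (Fin d)) (hζ : ζ ≠ cen) :
    ∃ L : EuclideanSpace ℝ (Fin d) →L[ℝ] ℝ,
      HasFDerivAt (fun z => (c0 + c1 * z i0 + c2 * (z i0) ^ 2) *
        ((z i - cen i) * (‖z - cen‖ ^ 2) ^ e)) L ζ ∧
      ∀ j : Fin d, L (EuclideanSpace.single j 1) =
        (c1 + 2 * c2 * ζ i0) * (if j = i0 then 1 else 0) *
          ((ζ i - cen i) * (‖ζ - cen‖ ^ 2) ^ e)
        + (c0 + c1 * ζ i0 + c2 * (ζ i0) ^ 2) *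
            ((if j = i then 1 else 0) * (‖ζ - cen‖ ^ 2) ^ e
              + (ζ i - cen i) * (e * (‖ζ - cen‖ ^ 2) ^ (e - 1) * (2 * (ζ j - cen j)))) := by
  have hproj : ∀ k : Fin d, HasFDerivAt (fun z : EuclideanSpace ℝ (Fin d) => z k)
      (EuclideanSpace.proj k : EuclideanSpace ℝ (Fin d) →L[ℝ] ℝ) ζ := fun k =>
    ((EuclideanSpace.proj (𝕜 := ℝ) k).hasFDerivAt (x := ζ)).congr_of_eventuallyEq
      (Filter.Eventually.of_forall fun z => rfl)
  have hA : HasFDerivAt (fun z : EuclideanSpace ℝ (Fin d) =>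
      c0 + c1 * z i0 + c2 * (z i0) ^ 2)
      ((c1 + 2 * c2 * ζ i0) • (EuclideanSpace.proj i0 : EuclideanSpace ℝ (Fin d) →L[ℝ] ℝ)) ζ :=
    (hasDerivAt_quad c0 c1 c2 (ζ i0)).comp_hasFDerivAt (f := fun z : EuclideanSpace ℝ (Fin d) => z i0) ζ (hproj i0)
  have hS : HasFDerivAt (fun z : EuclideanSpace ℝ (Fin d) => (‖z - cen‖ ^ 2) ^ e)
      ((e * (‖ζ - cen‖ ^ 2) ^ (e - 1)) • ((2:ℕ) • (innerSL ℝ (ζ - cen)))) ζ :=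
    (Real.hasDerivAt_rpow_const (Or.inl (sq_ne hζ))).comp_hasFDerivAt (f := fun z : EuclideanSpace ℝ (Fin d) => ‖z - cen‖ ^ 2) ζ (hasFDerivAt_Sq cen ζ)
  have hc : HasFDerivAt (fun z : EuclideanSpace ℝ (Fin d) => z i - cen i)
      (EuclideanSpace.proj i : EuclideanSpace ℝ (Fin d) →L[ℝ] ℝ) ζ :=
    (hproj i).sub_const (cen i)
  refine ⟨_, hA.mul (hc.mul hS), fun j => ?_⟩
  have h1 : ∀ k : Fin d, (EuclideanSpace.proj (𝕜 := ℝ) k) (EuclideanSpace.single j (1:ℝ)) =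
      if j = k then 1 else 0 := by
    intro k; simp [EuclideanSpace.single_apply, eq_comm]
  have h2 : (innerSL ℝ (ζ - cen)) (EuclideanSpace.single j (1:ℝ)) = ζ j - cen j := by
    simp [EuclideanSpace.inner_single_right]
  simp only [ContinuousLinearMap.add_apply, ContinuousLinearMap.smul_apply,
    ContinuousLinearMap.coe_smul', Pi.smul_apply, smul_eq_mul, nsmul_eq_mul, h1, h2,
    Nat.cast_ofNat]
  ring

/-- Derivative of a sum of shape-0 and shape-1 terms. -/
lemma shape_sum {d : ℕ} (cen : EuclideanSpace ℝ (Fin d)) (i0 i : Fin d) {N M : ℕ}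
    (p0 p1 p2 pe : Fin N → ℝ) (q0 q1 q2 qe : Fin M → ℝ)
    (ζ : EuclideanSpace ℝ (Fin d)) (hζ : ζ ≠ cen) :
    ∃ L : EuclideanSpace ℝ (Fin d) →L[ℝ] ℝ,
      HasFDerivAt (fun z =>
        (∑ k, (p0 k + p1 k * z i0 + p2 k * (z i0) ^ 2) * (‖z - cen‖ ^ 2) ^ (pe k)) +
        (∑ k, (q0 k + q1 k * z i0 + q2 k * (z i0) ^ 2) *
          ((z i - cen i) * (‖z - cen‖ ^ 2) ^ (qe k)))) L ζ ∧
      ∀ j : Fin d, L (EuclideanSpace.single j 1) =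
        (∑ k, ((p1 k + 2 * p2 k * ζ i0) * (if j = i0 then 1 else 0) * (‖ζ - cen‖ ^ 2) ^ (pe k)
          + (p0 k + p1 k * ζ i0 + p2 k * (ζ i0) ^ 2) *
              (pe k * (‖ζ - cen‖ ^ 2) ^ (pe k - 1) * (2 * (ζ j - cen j))))) +
        (∑ k, ((q1 k + 2 * q2 k * ζ i0) * (if j = i0 then 1 else 0) *
            ((ζ i - cen i) * (‖ζ - cen‖ ^ 2) ^ (qe k))
          + (q0 k + q1 k * ζ i0 + q2 k * (ζ i0) ^ 2) *
              ((if j = i then 1 else 0) * (‖ζ - cen‖ ^ 2) ^ (qe k)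
                + (ζ i - cen i) *
                  (qe k * (‖ζ - cen‖ ^ 2) ^ (qe k - 1) * (2 * (ζ j - cen j)))))) := by
  have h0 := fun k : Fin N => shape0 cen i0 (p0 k) (p1 k) (p2 k) (pe k) ζ hζ
  have h1 := fun k : Fin M => shape1 cen i0 i (q0 k) (q1 k) (q2 k) (qe k) ζ hζ
  choose L0 hL0 hL0e using h0
  choose L1 hL1 hL1e using h1
  refine ⟨(∑ k, L0 k) + (∑ k, L1 k),
    ((HasFDerivAt.fun_sum fun k _ => hL0 k).add (HasFDerivAt.fun_sum fun k _ => hL1 k)), fun j => ?_⟩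
  simp only [ContinuousLinearMap.add_apply, ContinuousLinearMap.sum_apply, hL0e, hL1e]

lemma norm_sq_eq_sum {d : ℕ} (v : EuclideanSpace ℝ (Fin d)) :
    ‖v‖ ^ 2 = ∑ i, (v i) ^ 2 := by
  rw [EuclideanSpace.norm_eq, Real.sq_sqrt (by positivity)]
  simp [Real.norm_eq_abs, sq_abs]

set_option maxHeartbeats 2000000 in
lemma part2 (d : ℕ) (hd : 3 ≤ d) (hd4 : d ≠ 4)
    (ζ' : EuclideanSpace ℝ (Fin d)) (hd0 : 0 < d)
    (r : ℝ) (hr : 0 < r)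
    (P : EuclideanSpace ℝ (Fin d) → ℝ)
    (hP : ∀ ζ, P ζ =
      (ζ (⟨0, hd0⟩ : Fin d) * ζ' (⟨0, hd0⟩ : Fin d) -
          dist ζ ζ' ^ 2 / ((d : ℝ) - 4)) * dist ζ ζ' ^ ((2 : ℝ) - d)
      - r ^ 2 / (d : ℝ) *
          (((d : ℝ) - 2) * ζ (⟨0, hd0⟩ : Fin d) *
              (ζ' (⟨0, hd0⟩ : Fin d) - ζ (⟨0, hd0⟩ : Fin d)) *
              dist ζ ζ' ^ (-(d : ℝ)) -
            dist ζ ζ' ^ ((2 : ℝ) - d))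
      - (dist ζ ζ' ^ 2 +
            2 * ζ (⟨0, hd0⟩ : Fin d) * ζ' (⟨0, hd0⟩ : Fin d) +
            ((d : ℝ) - 2) * ζ (⟨0, hd0⟩ : Fin d) ^ 2) *
          r ^ ((2 : ℝ) - d) / (d : ℝ)
      + r ^ ((4 : ℝ) - d) / ((d : ℝ) - 4))
    (ζ : EuclideanSpace ℝ (Fin d)) (hne : ζ ≠ ζ') :
    ζ (⟨0, hd0⟩ : Fin d) * lap P ζ = 2 * pd (⟨0, hd0⟩ : Fin d) P ζ := by
  have hn0 : (d:ℝ) ≠ 0 := by positivity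
  have hn4 : (d:ℝ) - 4 ≠ 0 := by
    intro h; exact hd4 (by exact_mod_cast (show (d:ℝ) = 4 by linarith))
  set i0 : Fin d := ⟨0, hd0⟩ with hi0
  set A : ℝ := ζ' i0 with hA
  -- level-1 coefficient vectors
  set p0 : Fin 5 → ℝ :=
    ![0, r^2/(d:ℝ), -(1/((d:ℝ)-4)), -(r^((2:ℝ)-(d:ℝ))/(d:ℝ)), r^((4:ℝ)-(d:ℝ))/((d:ℝ)-4)] with hp0
  set p1 : Fin 5 → ℝ :=
    ![-(r^2*((d:ℝ)-2)/(d:ℝ)*A), A, 0, 0, -(2*A*(r^((2:ℝ)-(d:ℝ))/(d:ℝ)))] with hp1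
  set p2 : Fin 5 → ℝ :=
    ![r^2*((d:ℝ)-2)/(d:ℝ), 0, 0, 0, -((r^((2:ℝ)-(d:ℝ))/(d:ℝ))*((d:ℝ)-2))] with hp2
  set pe : Fin 5 → ℝ := ![-((d:ℝ)/2), -((d:ℝ)/2)+1, -((d:ℝ)/2)+2, 1, 0] with hpe
  -- the function T
  set T : EuclideanSpace ℝ (Fin d) → ℝ := fun z =>
    (∑ k, (p0 k + p1 k * z i0 + p2 k * (z i0) ^ 2) * (‖z - ζ'‖ ^ 2) ^ (pe k)) +
    (∑ k : Fin 0, ((![] : Fin 0 → ℝ) k + (![] : Fin 0 → ℝ) k * z i0 +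
      (![] : Fin 0 → ℝ) k * (z i0) ^ 2) *
      ((z i0 - ζ' i0) * (‖z - ζ'‖ ^ 2) ^ ((![] : Fin 0 → ℝ) k))) with hTdef
  have hPT : ∀ z : EuclideanSpace ℝ (Fin d), z ≠ ζ' → P z = T z := by
    intro z hz
    have h0 : ‖z - ζ'‖ ≠ 0 := norm_ne_zero_iff.mpr (sub_ne_zero.mpr hz)
    have hS : (0:ℝ) < ‖z - ζ'‖ ^ 2 := by positivity
    have hgen : ∀ E : ℝ, ‖z - ζ'‖ ^ E = (‖z - ζ'‖ ^ 2) ^ (E/2) := by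
      intro E
      have h2 : ((2:ℕ):ℝ) * (E/2) = E := by push_cast; ring
      rw [← Real.rpow_natCast ‖z - ζ'‖ 2, ← Real.rpow_mul (norm_nonneg _), h2]
    have hstep : ∀ E : ℝ, (‖z - ζ'‖ ^ 2) ^ (E+1) = (‖z - ζ'‖ ^ 2) ^ E * ‖z - ζ'‖ ^ 2 := by
      intro E
      rw [Real.rpow_add hS, Real.rpow_one]
    have ha1 : (‖z - ζ'‖ ^ 2) ^ (-((d:ℝ)/2)+1) =
        (‖z - ζ'‖ ^ 2) ^ (-((d:ℝ)/2)) * ‖z - ζ'‖ ^ 2 := hstep _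
    have ha2 : (‖z - ζ'‖ ^ 2) ^ (-((d:ℝ)/2)+2) =
        (‖z - ζ'‖ ^ 2) ^ (-((d:ℝ)/2)) * ‖z - ζ'‖ ^ 2 * ‖z - ζ'‖ ^ 2 := by
      rw [show -((d:ℝ)/2)+2 = (-((d:ℝ)/2)+1)+1 by ring, hstep, ha1]
    rw [hP z, hTdef]
    simp only [Fin.sum_univ_five, Fin.sum_univ_zero, hp0, hp1, hp2, hpe,
      Matrix.cons_val_zero, Matrix.cons_val_one, Matrix.head_cons,
      Matrix.cons_val_two, Matrix.tail_cons, Matrix.cons_val_three,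
      Matrix.cons_val_four, Matrix.cons_val_fin_one, add_zero]
    rw [dist_eq_norm, hgen ((2:ℝ)-(d:ℕ)), hgen (-((d:ℕ):ℝ))]
    rw [show ((2:ℝ)-(d:ℕ))/2 = -((d:ℝ)/2)+1 by push_cast; ring,
      show (-((d:ℕ):ℝ))/2 = -((d:ℝ)/2) by push_cast; ring]
    rw [ha1, ha2, Real.rpow_one, Real.rpow_zero]
    field_simp
    ring
  -- level-2 coefficient vectors (coefficients of the gradient Ψ)
  set P0 : Fin d → Fin 5 → ℝ := fun j =>
    ![(if j = i0 then (1:ℝ) else 0) * (-(r^2*((d:ℝ)-2)/(d:ℝ)*A)),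
      (if j = i0 then (1:ℝ) else 0) * A, 0, 0,
      (if j = i0 then (1:ℝ) else 0) * (-(2*A*(r^((2:ℝ)-(d:ℝ))/(d:ℝ))))] with hP0
  set P1 : Fin d → Fin 5 → ℝ := fun j =>
    ![(if j = i0 then (1:ℝ) else 0) * (2*(r^2*((d:ℝ)-2)/(d:ℝ))), 0, 0, 0,
      (if j = i0 then (1:ℝ) else 0) * (-(2*(r^((2:ℝ)-(d:ℝ))/(d:ℝ))*((d:ℝ)-2)))] with hP1
  set P2 : Fin 5 → ℝ := ![0, 0, 0, 0, 0] with hP2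
  set Q0 : Fin 5 → ℝ :=
    ![0, 2*(-((d:ℝ)/2)+1)*(r^2/(d:ℝ)), 2*(-((d:ℝ)/2)+2)*(-(1/((d:ℝ)-4))),
      2*(-(r^((2:ℝ)-(d:ℝ))/(d:ℝ))), 0] with hQ0
  set Q1 : Fin 5 → ℝ :=
    ![2*(-((d:ℝ)/2))*(-(r^2*((d:ℝ)-2)/(d:ℝ)*A)), 2*(-((d:ℝ)/2)+1)*A, 0, 0, 0] with hQ1
  set Q2 : Fin 5 → ℝ :=
    ![2*(-((d:ℝ)/2))*(r^2*((d:ℝ)-2)/(d:ℝ)), 0, 0, 0, 0] with hQ2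
  set Qe : Fin 5 → ℝ :=
    ![-((d:ℝ)/2)-1, -((d:ℝ)/2), -((d:ℝ)/2)+1, 0, -1] with hQe
  set Ψ : Fin d → EuclideanSpace ℝ (Fin d) → ℝ := fun j z =>
    (∑ k, (P0 j k + P1 j k * z i0 + P2 k * (z i0) ^ 2) * (‖z - ζ'‖ ^ 2) ^ (pe k)) +
    (∑ k, (Q0 k + Q1 k * z i0 + Q2 k * (z i0) ^ 2) *
      ((z j - ζ' j) * (‖z - ζ'‖ ^ 2) ^ (Qe k))) with hΨ
  -- first derivatives of P away from ζ'
  have hpdP : ∀ z : EuclideanSpace ℝ (Fin d), z ≠ ζ' → ∀ j : Fin d,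
      pd j P z = Ψ j z := by
    intro z hz j
    obtain ⟨L, hL, hLe⟩ := shape_sum ζ' i0 i0 p0 p1 p2 pe
      (![] : Fin 0 → ℝ) (![] : Fin 0 → ℝ) (![] : Fin 0 → ℝ) (![] : Fin 0 → ℝ) z hz
    have hTz : HasFDerivAt T L z := hL
    have hev : P =ᶠ[nhds z] T := by
      filter_upwards [isOpen_compl_singleton.mem_nhds
        (by simpa [Set.mem_compl_iff] using hz : z ∈ ({ζ'} : Set _)ᶜ)] with w hw
      exact hPT w hw
    have hfd : fderiv ℝ P z = L := by rw [hev.fderiv_eq, hTz.fderiv]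
    show fderiv ℝ P z (EuclideanSpace.single j 1) = Ψ j z
    rw [hfd, hLe j, hΨ]
    simp only [Fin.sum_univ_five, Fin.sum_univ_zero, hp0, hp1, hp2, hpe,
      hP0, hP1, hP2, hQ0, hQ1, hQ2, hQe,
      Matrix.cons_val_zero, Matrix.cons_val_one, Matrix.head_cons,
      Matrix.cons_val_two, Matrix.tail_cons, Matrix.cons_val_three,
      Matrix.cons_val_four, Matrix.cons_val_fin_one, add_zero]
    rw [show -((d:ℝ)/2)+1-1 = -((d:ℝ)/2) by ring,
      show -((d:ℝ)/2)+2-1 = -((d:ℝ)/2)+1 by ring,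
      show (1:ℝ)-1 = 0 by norm_num, show (0:ℝ)-1 = -1 by norm_num]
    ring
  set W1 : ℝ := 2*(r^2*((d:ℝ)-2)/(d:ℝ)) * (‖ζ - ζ'‖ ^ 2)^(-((d:ℝ)/2)) + (-(2*(r^((2:ℝ)-(d:ℝ))/(d:ℝ))*((d:ℝ)-2))) with hW1
  set W2 : ℝ := 4*(-((d:ℝ)/2))*(2*(r^2*((d:ℝ)-2)/(d:ℝ))*ζ i0 - (r^2*((d:ℝ)-2)/(d:ℝ))*A) * (‖ζ - ζ'‖ ^ 2)^((-((d:ℝ)/2))-1)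
      + 4*((-((d:ℝ)/2))+1)*A*(‖ζ - ζ'‖ ^ 2)^(-((d:ℝ)/2)) with hW2
  set W3 : ℝ := 4*(-((d:ℝ)/2))*((-((d:ℝ)/2))-1)*((r^2*((d:ℝ)-2)/(d:ℝ))*(ζ i0)^2 - (r^2*((d:ℝ)-2)/(d:ℝ))*A*ζ i0) * (‖ζ - ζ'‖ ^ 2)^((-((d:ℝ)/2))-2)
      + 4*((-((d:ℝ)/2))+1)*(-((d:ℝ)/2))*(r^2/(d:ℝ) + A*ζ i0) * (‖ζ - ζ'‖ ^ 2)^((-((d:ℝ)/2))-1)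
      + 4*((-((d:ℝ)/2))+2)*((-((d:ℝ)/2))+1)*(-(1/((d:ℝ)-4))) * (‖ζ - ζ'‖ ^ 2)^(-((d:ℝ)/2)) with hW3
  set W4 : ℝ := 2*(-((d:ℝ)/2))*((r^2*((d:ℝ)-2)/(d:ℝ))*(ζ i0)^2 - (r^2*((d:ℝ)-2)/(d:ℝ))*A*ζ i0) * (‖ζ - ζ'‖ ^ 2)^((-((d:ℝ)/2))-1)
      + 2*((-((d:ℝ)/2))+1)*(r^2/(d:ℝ) + A*ζ i0) * (‖ζ - ζ'‖ ^ 2)^(-((d:ℝ)/2))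
      + 2*((-((d:ℝ)/2))+2)*(-(1/((d:ℝ)-4))) * (‖ζ - ζ'‖ ^ 2)^((-((d:ℝ)/2))+1)
      + 2*(-(r^((2:ℝ)-(d:ℝ))/(d:ℝ))) with hW4
  have hterm : ∀ i : Fin d, pd i (pd i P) ζ =
      W1 * (if i = i0 then 1 else 0)
      + W2 * ((if i = i0 then 1 else 0) * (ζ i - ζ' i))
      + W3 * (ζ i - ζ' i)^2 + W4 := by
    intro i
    obtain ⟨L2, hL2, hL2e⟩ := shape_sum ζ' i0 i (P0 i) (P1 i) P2 pe Q0 Q1 Q2 Qe ζ hne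
    have hΨi : HasFDerivAt (Ψ i) L2 ζ := hL2
    have hev : pd i P =ᶠ[nhds ζ] Ψ i := by
      filter_upwards [isOpen_compl_singleton.mem_nhds
        (by simpa [Set.mem_compl_iff] using hne : ζ ∈ ({ζ'} : Set _)ᶜ)] with w hw
      exact hpdP w hw i
    show fderiv ℝ (pd i P) ζ (EuclideanSpace.single i 1) = _
    rw [hev.fderiv_eq, hΨi.fderiv, hL2e i, hW1, hW2, hW3, hW4]
    simp only [hp0, hp1, hp2, hpe, hP0, hP1, hP2, hQ0, hQ1, hQ2, hQe,
      Fin.sum_univ_five,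
      Matrix.cons_val_zero, Matrix.cons_val_one, Matrix.head_cons,
      Matrix.cons_val_two, Matrix.tail_cons, Matrix.cons_val_three,
      Matrix.cons_val_four, Matrix.cons_val_fin_one]
    rw [show -((d:ℝ)/2)+1-1 = -((d:ℝ)/2) by ring,
      show -((d:ℝ)/2)+2-1 = -((d:ℝ)/2)+1 by ring,
      show -((d:ℝ)/2)-1-1 = -((d:ℝ)/2)-2 by ring,
      show (1:ℝ)-1 = 0 by norm_num, show (0:ℝ)-1 = -1 by norm_num,
      show (-1:ℝ)-1 = -2 by norm_num]
    simp only [Real.rpow_zero, Real.rpow_one]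
    rcases eq_or_ne i i0 with h | h
    · simp only [h, eq_self_iff_true, if_true]
      ring
    · simp only [if_neg h, eq_self_iff_true, if_true]
      ring
  have hSpos : (0:ℝ) < ‖ζ - ζ'‖ ^ 2 := by
    have h0 : ‖ζ - ζ'‖ ≠ 0 := norm_ne_zero_iff.mpr (sub_ne_zero.mpr hne)
    positivity
  have hlap : lap P ζ = W1 + W2 * (ζ i0 - ζ' i0) + W3 * (‖ζ - ζ'‖ ^ 2) + W4 * (d:ℝ) := by
    rw [lap, Finset.sum_congr rfl (fun i _ => hterm i)]
    have h1 : ∑ i : Fin d, (if i = i0 then (1:ℝ) else 0) = 1 := by simp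
    have h2 : ∑ i : Fin d, (if i = i0 then (1:ℝ) else 0) * (ζ i - ζ' i)
        = ζ i0 - ζ' i0 := by
      have hh : ∀ i : Fin d, (if i = i0 then (1:ℝ) else 0) * (ζ i - ζ' i)
          = if i = i0 then ζ i - ζ' i else 0 := by
        intro i; split <;> simp
      rw [Finset.sum_congr rfl fun i _ => hh i, Finset.sum_ite_eq']
      simp
    have h3 : ∑ i : Fin d, (ζ i - ζ' i)^2 = ‖ζ - ζ'‖^2 := by
      rw [norm_sq_eq_sum (ζ - ζ')]
      simp
    simp only [Finset.sum_add_distrib, ← Finset.mul_sum, h1, h2, h3, Finset.sum_const,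
      Finset.card_univ, Fintype.card_fin, mul_one, nsmul_eq_mul]
    ring
  have ck : ∀ (k : ℕ) (E : ℝ), E = -((d:ℝ)/2)-2 + k →
      (‖ζ - ζ'‖ ^ 2) ^ E = (‖ζ - ζ'‖ ^ 2) ^ (-((d:ℝ)/2)-2) * (‖ζ - ζ'‖ ^ 2) ^ k := by
    intro k E hE
    rw [hE, ← Real.rpow_natCast (‖ζ - ζ'‖ ^ 2) k, ← Real.rpow_add hSpos]
  rw [hlap, hpdP ζ hne i0, hΨ, hW1, hW2, hW3, hW4]
  simp only [hp0, hp1, hp2, hpe, hP0, hP1, hP2, hQ0, hQ1, hQ2, hQe,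
    Fin.sum_univ_five, eq_self_iff_true, if_true,
    Matrix.cons_val_zero, Matrix.cons_val_one, Matrix.head_cons,
    Matrix.cons_val_two, Matrix.tail_cons, Matrix.cons_val_three,
    Matrix.cons_val_four, Matrix.cons_val_fin_one]
  rw [ck 1 (-((d:ℝ)/2)-1) (by push_cast; ring), ck 2 (-((d:ℝ)/2)) (by push_cast; ring),
    ck 3 (-((d:ℝ)/2)+1) (by push_cast; ring), ck 4 (-((d:ℝ)/2)+2) (by push_cast; ring),
    Real.rpow_one, Real.rpow_zero]
  field_simp
  ring

lemma boundary_zero (d : ℕ) (hd : 3 ≤ d) (hd4 : d ≠ 4) (ζ' : EuclideanSpace ℝ (Fin d))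
    (r : ℝ) (hr : 0 < r) (hd0 : 0 < d) (z : EuclideanSpace ℝ (Fin d))
    (hz : dist z ζ' = r) :
      (z (⟨0, hd0⟩ : Fin d) * ζ' (⟨0, hd0⟩ : Fin d) -
          dist z ζ' ^ 2 / ((d : ℝ) - 4)) * dist z ζ' ^ ((2 : ℝ) - d)
      - r ^ 2 / (d : ℝ) *
          (((d : ℝ) - 2) * z (⟨0, hd0⟩ : Fin d) *
              (ζ' (⟨0, hd0⟩ : Fin d) - z (⟨0, hd0⟩ : Fin d)) *
              dist z ζ' ^ (-(d : ℝ)) -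
            dist z ζ' ^ ((2 : ℝ) - d))
      - (dist z ζ' ^ 2 +
            2 * z (⟨0, hd0⟩ : Fin d) * ζ' (⟨0, hd0⟩ : Fin d) +
            ((d : ℝ) - 2) * z (⟨0, hd0⟩ : Fin d) ^ 2) *
          r ^ ((2 : ℝ) - d) / (d : ℝ)
      + r ^ ((4 : ℝ) - d) / ((d : ℝ) - 4) = 0 := by
  have hn0 : (d:ℝ) ≠ 0 := by positivity
  have hn4 : (d:ℝ) - 4 ≠ 0 := by
    intro h
    apply hd4
    have : (d:ℝ) = 4 := by linarith
    exact_mod_cast this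
  rw [hz]
  have e2 : r ^ ((2:ℝ) - d) = r ^ 2 * r ^ (-(d:ℝ)) := by
    rw [show (2:ℝ) - d = 2 + (-(d:ℝ)) by ring, Real.rpow_add hr,
      show ((2:ℝ)) = ((2:ℕ):ℝ) by norm_num, Real.rpow_natCast]
  have e4 : r ^ ((4:ℝ) - d) = r ^ 4 * r ^ (-(d:ℝ)) := by
    rw [show (4:ℝ) - d = 4 + (-(d:ℝ)) by ring, Real.rpow_add hr,
      show ((4:ℝ)) = ((4:ℕ):ℝ) by norm_num, Real.rpow_natCast]
  rw [e2, e4]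
  field_simp
  ring

/-- The pressure
`P(ζ) = (ζ₁ζ₁' − ρ²/(d−4))·ρ^{2−d} − (r²/d)·((d−2)ζ₁(ζ₁'−ζ₁)ρ^{−d} − ρ^{2−d})
 − (ρ² + 2ζ₁ζ₁' + (d−2)ζ₁²)·r^{2−d}/d + r^{4−d}/(d−4)`, `ρ = |ζ − ζ'|`,
solves the free-boundary problem of the expanding sphere of radius `r` centered
at `ζ'` in the medium with `κη = ζ₁⁻²`, `η = 1`:
(i) `P` vanishes on the boundary sphere `|ζ − ζ'| = r`;
(ii) `ζ₁·ΔP = 2·∂₁P` (equivalently `∇·(ζ₁⁻² ∇P) = 0`) away from `ζ'` on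
`{ζ₁ ≠ 0}` (for `d ≥ 3`, `d ≠ 4`). -/
theorem expanding_sphere_pressure (d : ℕ) (hd : 3 ≤ d) (hd4 : d ≠ 4)
    (ζ' : EuclideanSpace ℝ (Fin d))
    (hζ'1 : ζ' (⟨0, by omega⟩ : Fin d) ≠ 0)
    (r : ℝ) (hr : 0 < r)
    (P : EuclideanSpace ℝ (Fin d) → ℝ)
    (hP : ∀ ζ, P ζ =
      (ζ (⟨0, by omega⟩ : Fin d) * ζ' (⟨0, by omega⟩ : Fin d) -
          dist ζ ζ' ^ 2 / ((d : ℝ) - 4)) * dist ζ ζ' ^ ((2 : ℝ) - d)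
      - r ^ 2 / (d : ℝ) *
          (((d : ℝ) - 2) * ζ (⟨0, by omega⟩ : Fin d) *
              (ζ' (⟨0, by omega⟩ : Fin d) - ζ (⟨0, by omega⟩ : Fin d)) *
              dist ζ ζ' ^ (-(d : ℝ)) -
            dist ζ ζ' ^ ((2 : ℝ) - d))
      - (dist ζ ζ' ^ 2 +
            2 * ζ (⟨0, by omega⟩ : Fin d) * ζ' (⟨0, by omega⟩ : Fin d) +
            ((d : ℝ) - 2) * ζ (⟨0, by omega⟩ : Fin d) ^ 2) *
          r ^ ((2 : ℝ) - d) / (d : ℝ)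
      + r ^ ((4 : ℝ) - d) / ((d : ℝ) - 4)) :
    (∀ ζ : EuclideanSpace ℝ (Fin d), dist ζ ζ' = r → P ζ = 0) ∧
    (∀ ζ : EuclideanSpace ℝ (Fin d),
      ζ (⟨0, by omega⟩ : Fin d) ≠ 0 → ζ ≠ ζ' →
        ζ (⟨0, by omega⟩ : Fin d) * lap P ζ =
          2 * pd (⟨0, by omega⟩ : Fin d) P ζ) := by
  have hd0 : 0 < d := by omega
  constructor
  · intro z hz
    rw [hP z]
    exact boundary_zero d hd hd4 ζ' r hr hd0 z hz
  · intro ζ hx hne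
    exact part2 d hd hd4 ζ' hd0 r hr P hP ζ hne
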